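/- arXiv:2401.14737 — 2 statements merged into one kernel-verified Lean document; each statement's English description precedes it below -/
import Mathlib

section
/- For every integer expression e one can construct a linear set C(0, P) ⊆ ℕ^{1+d} (with all period vectors having at least one coordinate equal to 1 among the last d coordinates) such that for all n ∈ ℕ: n ∈ L(e) if and only if the vector (n, 1, 1, ..., 1) ∈ C(0, P). Moreover, d and |P| are linear in the number of operators of e. -/
/-! Common definitions: semi-linear sets, Parikh automata on finite and infinite words. -/

/-- The linear set with base vector `b` and finite set `P` of period vectors. -/
def LinSet {d : ℕ} {M : Type} [AddCommMonoid M] (b : Fin d → M)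
    (P : Finset (Fin d → M)) : Set (Fin d → M) :=
  {v | ∃ z : (Fin d → M) → ℕ, v = b + ∑ p ∈ P, z p • p}

/-- A set is semi-linear if it is a finite union of linear sets. -/
def SemiLin {d : ℕ} {M : Type} [AddCommMonoid M] (S : Set (Fin d → M)) : Prop :=
  ∃ (n : ℕ) (b : Fin n → Fin d → M) (P : Fin n → Finset (Fin d → M)),
    S = ⋃ i, LinSet (b i) (P i)

/-- The length-`n` prefix of an infinite word. -/
def pref {S : Type} (α : ℕ → S) (n : ℕ) : List S := List.ofFn fun i : Fin n => α i.1

/-- An infinite word is ultimately periodic if it has the form `u v^ω`. -/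
def UltimatelyPeriodic {S : Type} (α : ℕ → S) : Prop :=
  ∃ n p, 0 < p ∧ ∀ i, n ≤ i → α (i + p) = α i

/-- The finite infix `α[m+1 : n]` (0-indexed positions `m, …, n-1`). -/
def infixSeg {S : Type} (α : ℕ → S) (m n : ℕ) : List S :=
  List.ofFn fun j : Fin (n - m) => α (m + j.1)

/-- `W^ω`: infinite concatenations of non-empty words from `W`. -/
def omegaPow {S : Type} (W : Set (List S)) : Set (ℕ → S) :=
  {α | ∃ k : ℕ → ℕ, k 0 = 0 ∧ StrictMono k ∧ ∀ i, infixSeg α (k i) (k (i + 1)) ∈ W}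

/-- A deterministic Parikh automaton with states `Q`, alphabet `S`, dimension `d`,
and a constraint set `C` of vectors over `M` (`M = ℕ`, or `M = ℕ∞` for limit PA). -/
structure DetPA (Q S : Type) (d : ℕ) (M : Type) where
  init : Q
  trans : Q → S → (Fin d → ℕ) × Q
  acc : Q → Prop
  C : Set (Fin d → M)

namespace DetPA

variable {Q S M : Type} {d : ℕ}

/-- The run of `A` from state `p` on the infinite word `α`: state after `i` letters. -/
def run (A : DetPA Q S d M) (p : Q) (α : ℕ → S) : ℕ → Q
  | 0 => p
  | i + 1 => (A.trans (A.run p α i) (α i)).2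

/-- The state of the unique run of `A` on `α` after `i` letters. -/
def stateAt (A : DetPA Q S d M) (α : ℕ → S) : ℕ → Q := A.run A.init α

/-- The vector of the `i`-th transition of the unique run of `A` on `α`. -/
def step (A : DetPA Q S d M) (α : ℕ → S) (i : ℕ) : Fin d → ℕ :=
  (A.trans (A.stateAt α i) (α i)).1

/-- Sum of transition vectors of the run of `A` on `α` on positions `m, …, n-1`. -/
def vecSum (A : DetPA Q S d M) (α : ℕ → S) (m n : ℕ) : Fin d → ℕ :=
  ∑ i ∈ Finset.Ico m n, A.step α i

/-- The state reached when reading a finite word from state `p`. -/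
def runList (A : DetPA Q S d M) : Q → List S → Q
  | p, [] => p
  | p, a :: w => A.runList (A.trans p a).2 w

/-- The sum of transition vectors collected when reading a finite word from state `p`. -/
def sumList (A : DetPA Q S d M) : Q → List S → (Fin d → ℕ)
  | _, [] => 0
  | p, a :: w => (A.trans p a).1 + A.sumList (A.trans p a).2 w

/-- Finite-word acceptance: end in an accepting state with vector sum in `C`. -/
def AcceptsWord (A : DetPA Q S d ℕ) (w : List S) : Prop :=
  A.acc (A.runList A.init w) ∧ A.sumList A.init w ∈ A.C

/-- The run visits accepting states infinitely often. -/
def InfAcc (A : DetPA Q S d M) (α : ℕ → S) : Prop :=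
  ∀ n, ∃ i, n ≤ i ∧ A.acc (A.stateAt α i)

/-- Reachability condition. -/
def ReachAccept (A : DetPA Q S d ℕ) (α : ℕ → S) : Prop :=
  ∃ i, 1 ≤ i ∧ A.acc (A.stateAt α i) ∧ A.vecSum α 0 i ∈ A.C

/-- Reachability-regular condition. -/
def ReachRegAccept (A : DetPA Q S d ℕ) (α : ℕ → S) : Prop :=
  A.ReachAccept α ∧ A.InfAcc α

/-- Büchi condition. -/
def BuchiAccept (A : DetPA Q S d ℕ) (α : ℕ → S) : Prop :=
  ∀ n, ∃ i, n ≤ i ∧ 1 ≤ i ∧ A.acc (A.stateAt α i) ∧ A.vecSum α 0 i ∈ A.C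

/-- Weak reset condition. -/
def WeakResetAccept (A : DetPA Q S d ℕ) (α : ℕ → S) : Prop :=
  ∃ k : ℕ → ℕ, k 0 = 0 ∧ StrictMono k ∧
    (∀ i, A.acc (A.stateAt α (k (i + 1)))) ∧
    (∀ i, A.vecSum α (k i) (k (i + 1)) ∈ A.C)

/-- Strong reset condition: accepting states occur infinitely often, and between any
two consecutive accepting positions (and from position `0` to the first one) the
collected vector lies in `C`. -/
def StrongResetAccept (A : DetPA Q S d ℕ) (α : ℕ → S) : Prop :=
  (∀ n, ∃ i, n ≤ i ∧ 1 ≤ i ∧ A.acc (A.stateAt α i)) ∧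
  ∀ m n, m < n → (m = 0 ∨ (1 ≤ m ∧ A.acc (A.stateAt α m))) →
    A.acc (A.stateAt α n) →
    (∀ j, m < j → j < n → ¬ A.acc (A.stateAt α j)) →
    A.vecSum α m n ∈ A.C

/-- The extended Parikh image of the unique run of `A` on `α`: componentwise the
supremum in `ℕ∞` of the partial sums (`∞` iff the component is incremented
infinitely often, else the finite total sum). -/
noncomputable def limImage (A : DetPA Q S d M) (α : ℕ → S) : Fin d → ℕ∞ :=
  fun j => ⨆ n, (A.vecSum α 0 n j : ℕ∞)

/-- Limit condition. -/
def LimitAccept (A : DetPA Q S d ℕ∞) (α : ℕ → S) : Prop :=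
  A.InfAcc α ∧ A.limImage α ∈ A.C

end DetPA

/-- `U` is recognized by a deterministic finite-word Parikh automaton. -/
def DetPARecogFin {S : Type} (U : Set (List S)) : Prop :=
  ∃ (d : ℕ) (Q : Type) (_ : Finite Q) (A : DetPA Q S d ℕ),
    SemiLin A.C ∧ U = {w | A.AcceptsWord w}

/-- `L` is recognized by a deterministic reachability PA. -/
def DetReachRecog {S : Type} (L : Set (ℕ → S)) : Prop :=
  ∃ (d : ℕ) (Q : Type) (_ : Finite Q) (A : DetPA Q S d ℕ),
    SemiLin A.C ∧ L = {α | A.ReachAccept α}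

/-- `L` is recognized by a deterministic reachability-regular PA. -/
def DetReachRegRecog {S : Type} (L : Set (ℕ → S)) : Prop :=
  ∃ (d : ℕ) (Q : Type) (_ : Finite Q) (A : DetPA Q S d ℕ),
    SemiLin A.C ∧ L = {α | A.ReachRegAccept α}

/-- `L` is recognized by a deterministic Büchi PA. -/
def DetBuchiRecog {S : Type} (L : Set (ℕ → S)) : Prop :=
  ∃ (d : ℕ) (Q : Type) (_ : Finite Q) (A : DetPA Q S d ℕ),
    SemiLin A.C ∧ L = {α | A.BuchiAccept α}

/-- `L` is recognized by a deterministic weak reset PA. -/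
def DetWeakResetRecog {S : Type} (L : Set (ℕ → S)) : Prop :=
  ∃ (d : ℕ) (Q : Type) (_ : Finite Q) (A : DetPA Q S d ℕ),
    SemiLin A.C ∧ L = {α | A.WeakResetAccept α}

/-- `L` is recognized by a deterministic strong reset PA. -/
def DetStrongResetRecog {S : Type} (L : Set (ℕ → S)) : Prop :=
  ∃ (d : ℕ) (Q : Type) (_ : Finite Q) (A : DetPA Q S d ℕ),
    SemiLin A.C ∧ L = {α | A.StrongResetAccept α}

/-- `L` is recognized by a deterministic limit PA (constraint set over `ℕ∞`). -/
def DetLimitRecog {S : Type} (L : Set (ℕ → S)) : Prop :=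
  ∃ (d : ℕ) (Q : Type) (_ : Finite Q) (A : DetPA Q S d ℕ∞),
    SemiLin A.C ∧ L = {α | A.LimitAccept α}

/-- A nondeterministic Parikh automaton. -/
structure NPA (Q S : Type) (d : ℕ) where
  init : Q
  trans : Q → S → (Fin d → ℕ) → Q → Prop
  acc : Q → Prop
  C : Set (Fin d → ℕ)

namespace NPA

variable {Q S : Type} {d : ℕ}

/-- `r, v` form a run of `A` on the infinite word `α`. -/
def IsRun (A : NPA Q S d) (α : ℕ → S) (r : ℕ → Q) (v : ℕ → Fin d → ℕ) : Prop :=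
  r 0 = A.init ∧ ∀ i, A.trans (r i) (α i) (v i) (r (i + 1))

/-- Partial sums of the vectors of a run over positions `m, …, n-1`. -/
def partSum (v : ℕ → Fin d → ℕ) (m n : ℕ) : Fin d → ℕ := ∑ i ∈ Finset.Ico m n, v i

/-- Nondeterministic reachability-regular acceptance. -/
def ReachRegAccept (A : NPA Q S d) (α : ℕ → S) : Prop :=
  ∃ r v, A.IsRun α r v ∧ (∃ i, 1 ≤ i ∧ A.acc (r i) ∧ partSum v 0 i ∈ A.C) ∧
    ∀ n, ∃ i, n ≤ i ∧ A.acc (r i)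

/-- Nondeterministic strong reset acceptance. -/
def StrongResetAccept (A : NPA Q S d) (α : ℕ → S) : Prop :=
  ∃ r v, A.IsRun α r v ∧
    (∀ n, ∃ i, n ≤ i ∧ 1 ≤ i ∧ A.acc (r i)) ∧
    ∀ m n, m < n → (m = 0 ∨ (1 ≤ m ∧ A.acc (r m))) → A.acc (r n) →
      (∀ j, m < j → j < n → ¬ A.acc (r j)) → partSum v m n ∈ A.C

/-- Nondeterministic weak reset acceptance. -/
def WeakResetAccept (A : NPA Q S d) (α : ℕ → S) : Prop :=
  ∃ r v, A.IsRun α r v ∧ ∃ k : ℕ → ℕ, k 0 = 0 ∧ StrictMono k ∧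
    (∀ i, A.acc (r (k (i + 1)))) ∧ (∀ i, partSum v (k i) (k (i + 1)) ∈ A.C)

/-- Runs of a nondeterministic PA on a finite word, from state `p` to state `q`
collecting vector sum `v`. -/
def ListRun (A : NPA Q S d) : Q → List S → (Fin d → ℕ) → Q → Prop
  | p, [], v, q => q = p ∧ v = 0
  | p, a :: w, v, q => ∃ u p', A.trans p a u p' ∧ ∃ v', A.ListRun p' w v' q ∧ v = u + v'

/-- Finite-word acceptance for a nondeterministic PA. -/
def AcceptsWord (A : NPA Q S d) (w : List S) : Prop :=
  ∃ v q, A.ListRun A.init w v q ∧ A.acc q ∧ v ∈ A.C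

end NPA

/-- `L` is recognized by a (nondeterministic) reachability-regular PA. -/
def NPAReachRegRecog {S : Type} (L : Set (ℕ → S)) : Prop :=
  ∃ (d : ℕ) (Q : Type) (_ : Finite Q) (A : NPA Q S d),
    SemiLin A.C ∧ L = {α | A.ReachRegAccept α}

/-- `L` is recognized by a (nondeterministic) strong reset PA. -/
def NPAStrongResetRecog {S : Type} (L : Set (ℕ → S)) : Prop :=
  ∃ (d : ℕ) (Q : Type) (_ : Finite Q) (A : NPA Q S d),
    SemiLin A.C ∧ L = {α | A.StrongResetAccept α}

/-- `L` is recognized by a (nondeterministic) weak reset PA. -/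
def NPAWeakResetRecog {S : Type} (L : Set (ℕ → S)) : Prop :=
  ∃ (d : ℕ) (Q : Type) (_ : Finite Q) (A : NPA Q S d),
    SemiLin A.C ∧ L = {α | A.WeakResetAccept α}

/-- A nondeterministic Büchi automaton. -/
structure NBA (Q S : Type) where
  init : Q
  trans : Q → S → Q → Prop
  acc : Q → Prop

/-- Büchi acceptance. -/
def NBA.Accepts {Q S : Type} (B : NBA Q S) (α : ℕ → S) : Prop :=
  ∃ r : ℕ → Q, r 0 = B.init ∧ (∀ i, B.trans (r i) (α i) (r (i + 1))) ∧
    ∀ n, ∃ i, n ≤ i ∧ B.acc (r i)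

/-- `L` is ω-regular: recognized by a nondeterministic Büchi automaton. -/
def OmegaRegular {S : Type} (L : Set (ℕ → S)) : Prop :=
  ∃ (Q : Type) (_ : Finite Q) (B : NBA Q S), L = {α | B.Accepts α}

/-- Integer expressions. -/
inductive IntExpr : Type
  | const : ℕ → IntExpr
  | add : IntExpr → IntExpr → IntExpr
  | union : IntExpr → IntExpr → IntExpr

/-- The set of integers denoted by an integer expression. -/
def IntExpr.lang : IntExpr → Set ℕ
  | .const n => {n}
  | .add e₁ e₂ => {m | ∃ u ∈ e₁.lang, ∃ v ∈ e₂.lang, m = u + v}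
  | .union e₁ e₂ => e₁.lang ∪ e₂.lang

/-- The number of operators of an integer expression. -/
def IntExpr.ops : IntExpr → ℕ
  | .const _ => 0
  | .add e₁ e₂ => e₁.ops + e₂.ops + 1
  | .union e₁ e₂ => e₁.ops + e₂.ops + 1


def GLin {ι : Type} (P : Finset (ι → ℕ)) : Set (ι → ℕ) :=
  {v | ∃ z : (ι → ℕ) → ℕ, v = ∑ p ∈ P, z p • p}

def Tvec {ι : Type} (n : ℕ) : Option ι → ℕ := fun o => o.elim n fun _ => 1

def embL {ι κ : Type} (v : Option ι → ℕ) : Option (ι ⊕ κ) → ℕ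
  | none => v none
  | some (Sum.inl i) => v (some i)
  | some (Sum.inr _) => 0

def embR {ι κ : Type} (v : Option κ → ℕ) : Option (ι ⊕ κ) → ℕ
  | none => v none
  | some (Sum.inl _) => 0
  | some (Sum.inr j) => v (some j)

lemma embL_inj {ι κ : Type} : Function.Injective (embL (ι := ι) (κ := κ)) := by
  intro u v h
  funext o
  cases o with
  | none => exact congrFun h none
  | some i => exact congrFun h (some (Sum.inl i))

lemma embR_inj {ι κ : Type} : Function.Injective (embR (ι := ι) (κ := κ)) := by
  intro u v h
  funext o
  cases o with
  | none => exact congrFun h none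
  | some i => exact congrFun h (some (Sum.inr i))

def qfill1 {ι₁ ι₂ : Type} : Option (Unit ⊕ (ι₁ ⊕ ι₂)) → ℕ
  | none => 0
  | some (Sum.inl _) => 1
  | some (Sum.inr (Sum.inl _)) => 1
  | some (Sum.inr (Sum.inr _)) => 0

def qfill2 {ι₁ ι₂ : Type} : Option (Unit ⊕ (ι₁ ⊕ ι₂)) → ℕ
  | none => 0
  | some (Sum.inl _) => 1
  | some (Sum.inr (Sum.inl _)) => 0
  | some (Sum.inr (Sum.inr _)) => 1

lemma sumv_apply {ι β : Type} (s : Finset β) (z : β → ℕ) (f : β → ι → ℕ) (o : ι) :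
    (∑ p ∈ s, z p • f p) o = ∑ p ∈ s, z p * f p o := by
  simp [Finset.sum_apply]

lemma glin_reindex {ι κ : Type} (σ : κ ≃ ι) (P : Finset (ι → ℕ)) (v : ι → ℕ)
    [DecidableEq (κ → ℕ)] :
    (v ∘ σ) ∈ GLin (P.image (fun p => p ∘ σ)) ↔ v ∈ GLin P := by
  classical
  have Finj : ∀ x ∈ P, ∀ y ∈ P, (x ∘ σ : κ → ℕ) = y ∘ σ → x = y := by
    intro x _ y _ h
    funext i
    have := congrFun h (σ.symm i)
    simpa using this
  have hsum : ∀ w : (κ → ℕ) → ℕ,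
      ∑ q ∈ P.image (fun p => p ∘ σ), w q • q = (∑ p ∈ P, w (p ∘ σ) • p) ∘ σ := by
    intro w
    rw [Finset.sum_image Finj]
    funext k
    simp [sumv_apply, Function.comp]
  constructor
  · rintro ⟨z, hz⟩
    refine ⟨fun p => z (p ∘ σ), ?_⟩
    have h2 := hz.trans (hsum z)
    funext i
    have := congrFun h2 (σ.symm i)
    simpa using this
  · rintro ⟨z, hz⟩
    refine ⟨fun q => z (q ∘ σ.symm), ?_⟩
    rw [hsum]
    funext k
    have : ∀ p : ι → ℕ, (p ∘ σ) ∘ σ.symm = p := by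
      intro p; funext i; simp
    simp only [this]
    exact congrFun (congrArg (fun f => f ∘ σ) hz) k

lemma cancel_one {S : ℕ} (h : (1 : ℕ) = S + 1) : S = 0 := by omega

lemma intExpr_key (e : IntExpr) :
    ∃ (ι : Type) (_ : Fintype ι) (_ : Nonempty ι) (P : Finset (Option ι → ℕ)),
      (∀ p ∈ P, ∃ i : ι, p (some i) = 1) ∧
      (∀ n, n ∈ e.lang ↔ Tvec n ∈ GLin P) ∧
      Fintype.card ι ≤ 2 * e.ops + 1 ∧ P.card ≤ 3 * e.ops + 1 := by
  classical
  induction e with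
  | const n =>
    refine ⟨PUnit, inferInstance, ⟨PUnit.unit⟩, {Tvec n}, ?_, ?_, by simp [IntExpr.ops], by simp [IntExpr.ops]⟩
    · intro p hp
      rw [Finset.mem_singleton] at hp
      exact ⟨PUnit.unit, by simp [hp, Tvec]⟩
    · intro m
      constructor
      · intro hm
        have hmn : m = n := hm
        refine ⟨fun _ => 1, ?_⟩
        simp [hmn]
      · rintro ⟨z, hz⟩
        rw [Finset.sum_singleton] at hz
        have h1 := congrFun hz (some PUnit.unit)
        have h0 := congrFun hz none
        simp [Tvec] at h1 h0
        show m = n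
        rw [← h1, one_mul] at h0
        exact h0
  | add e₁ e₂ ih₁ ih₂ =>
    obtain ⟨ι₁, F₁, ne₁, P₁, hspec₁, hiff₁, hcard₁, hPc₁⟩ := ih₁
    obtain ⟨ι₂, F₂, ne₂, P₂, hspec₂, hiff₂, hcard₂, hPc₂⟩ := ih₂

    have hdisj : Disjoint (P₁.image (embL (κ := ι₂))) (P₂.image (embR (ι := ι₁))) := by
      rw [Finset.disjoint_left]
      rintro q hq1 hq2
      obtain ⟨p, hp, rfl⟩ := Finset.mem_image.mp hq1
      obtain ⟨p', hp', heq⟩ := Finset.mem_image.mp hq2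
      obtain ⟨i, hi⟩ := hspec₁ p hp
      have h := congrFun heq (some (Sum.inl i))
      simp [embL, embR, hi] at h
    have hsum : ∀ z : (Option (ι₁ ⊕ ι₂) → ℕ) → ℕ,
        ∑ q ∈ P₁.image (embL (κ := ι₂)) ∪ P₂.image (embR (ι := ι₁)), z q • q
          = ∑ p ∈ P₁, z (embL p) • embL p + ∑ p ∈ P₂, z (embR p) • embR p := by
      intro z
      rw [Finset.sum_union hdisj,
        Finset.sum_image (fun x _ y _ h => embL_inj h),
        Finset.sum_image (fun x _ y _ h => embR_inj h)]
    refine ⟨ι₁ ⊕ ι₂, inferInstance, ⟨Sum.inl ne₁.some⟩,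
      P₁.image embL ∪ P₂.image embR, ?_, ?_, ?_, ?_⟩
    · intro q hq
      rcases Finset.mem_union.mp hq with h | h
      · obtain ⟨p, hp, rfl⟩ := Finset.mem_image.mp h
        obtain ⟨i, hi⟩ := hspec₁ p hp
        exact ⟨Sum.inl i, by simpa [embL] using hi⟩
      · obtain ⟨p, hp, rfl⟩ := Finset.mem_image.mp h
        obtain ⟨i, hi⟩ := hspec₂ p hp
        exact ⟨Sum.inr i, by simpa [embR] using hi⟩
    · intro n
      constructor
      · rintro ⟨u, hu, w, hw, rfl⟩
        obtain ⟨z₁, hz₁⟩ := (hiff₁ u).mp hu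
        obtain ⟨z₂, hz₂⟩ := (hiff₂ w).mp hw
        set zf : (Option (ι₁ ⊕ ι₂) → ℕ) → ℕ := fun q =>
          if q ∈ P₁.image (embL (κ := ι₂)) then
            z₁ (fun o => o.elim (q none) fun i => q (some (Sum.inl i)))
          else z₂ (fun o => o.elim (q none) fun j => q (some (Sum.inr j))) with hzf
        refine ⟨zf, ?_⟩
        rw [hsum]
        have hzL : ∀ p ∈ P₁, zf (embL p) = z₁ p := by
          intro p hp
          rw [hzf]
          simp only
          rw [if_pos (Finset.mem_image_of_mem _ hp)]
          congr 1
          funext o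
          cases o <;> rfl
        have hzR : ∀ p ∈ P₂, zf (embR p) = z₂ p := by
          intro p hp
          rw [hzf]
          simp only
          rw [if_neg (fun hmem => Finset.disjoint_left.mp hdisj hmem (Finset.mem_image_of_mem _ hp))]
          congr 1
          funext o
          cases o <;> rfl
        have hA : ∑ p ∈ P₁, zf (embL p) • embL (κ := ι₂) p = ∑ p ∈ P₁, z₁ p • embL p :=
          Finset.sum_congr rfl fun p hp => by rw [hzL p hp]
        have hB : ∑ p ∈ P₂, zf (embR p) • embR (ι := ι₁) p = ∑ p ∈ P₂, z₂ p • embR p :=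
          Finset.sum_congr rfl fun p hp => by rw [hzR p hp]
        rw [hA, hB]
        funext o
        cases o with
        | none =>
          have h1 := congrFun hz₁ none
          have h2 := congrFun hz₂ none
          simp only [Tvec, Option.elim, sumv_apply] at h1 h2
          simp only [Tvec, Option.elim, Pi.add_apply, sumv_apply, embL, embR]
          rw [h1, h2]
        | some s =>
          cases s with
          | inl i =>
            have h1 := congrFun hz₁ (some i)
            simp only [Tvec, Option.elim, sumv_apply] at h1
            simp only [Tvec, Option.elim, Pi.add_apply, sumv_apply, embL, embR]
            simp [← h1]
          | inr j =>
            have h2 := congrFun hz₂ (some j)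
            simp only [Tvec, Option.elim, sumv_apply] at h2
            simp only [Tvec, Option.elim, Pi.add_apply, sumv_apply, embL, embR]
            simp [← h2]
      · rintro ⟨z, hz⟩
        rw [hsum z] at hz
        have hueq : Tvec (∑ p ∈ P₁, z (embL (κ := ι₂) p) * p none)
            = ∑ p ∈ P₁, z (embL (κ := ι₂) p) • p := by
          funext o
          cases o with
          | none => simp [Tvec, sumv_apply]
          | some i =>
            have h := congrFun hz (some (Sum.inl i))
            simp only [Tvec, Option.elim, Pi.add_apply, sumv_apply, embL, embR,
              mul_zero, Finset.sum_const_zero, add_zero] at h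
            simpa [Tvec, sumv_apply] using h
        have hweq : Tvec (∑ p ∈ P₂, z (embR (ι := ι₁) p) * p none)
            = ∑ p ∈ P₂, z (embR (ι := ι₁) p) • p := by
          funext o
          cases o with
          | none => simp [Tvec, sumv_apply]
          | some j =>
            have h := congrFun hz (some (Sum.inr j))
            simp only [Tvec, Option.elim, Pi.add_apply, sumv_apply, embL, embR,
              mul_zero, Finset.sum_const_zero, zero_add] at h
            simpa [Tvec, sumv_apply] using h
        have hun := (hiff₁ _).mpr ⟨fun p => z (embL p), hueq⟩
        have hwn := (hiff₂ _).mpr ⟨fun p => z (embR p), hweq⟩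
        refine ⟨_, hun, _, hwn, ?_⟩
        have h := congrFun hz none
        simpa [Tvec, Pi.add_apply, sumv_apply, embL, embR] using h
    · have h1 : Fintype.card ι₁ ≤ 2 * e₁.ops + 1 := hcard₁
      have h2 : Fintype.card ι₂ ≤ 2 * e₂.ops + 1 := hcard₂
      simp only [Fintype.card_sum, IntExpr.ops]
      omega
    · have h1 := hPc₁; have h2 := hPc₂
      have c1 := Finset.card_image_le (s := P₁) (f := embL (κ := ι₂))
      have c2 := Finset.card_image_le (s := P₂) (f := embR (ι := ι₁))
      have cu := Finset.card_union_le (P₁.image (embL (κ := ι₂))) (P₂.image (embR (ι := ι₁)))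
      simp only [IntExpr.ops]
      omega
  | union e₁ e₂ ih₁ ih₂ =>
    obtain ⟨ι₁, F₁, ne₁, P₁, hspec₁, hiff₁, hcard₁, hPc₁⟩ := ih₁
    obtain ⟨ι₂, F₂, ne₂, P₂, hspec₂, hiff₂, hcard₂, hPc₂⟩ := ih₂
    set G₁ : (Option ι₁ → ℕ) → Option (Unit ⊕ (ι₁ ⊕ ι₂)) → ℕ :=
      fun p => embR (embL p) with hG₁
    set G₂ : (Option ι₂ → ℕ) → Option (Unit ⊕ (ι₁ ⊕ ι₂)) → ℕ :=
      fun p => embR (embR p) with hG₂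
    have hG₁inj : Function.Injective G₁ := fun a b h => embL_inj (embR_inj h)
    have hG₂inj : Function.Injective G₂ := fun a b h => embR_inj (embR_inj h)
    -- coordinate computations
    have hG₁sel : ∀ p, G₁ p (some (Sum.inl ())) = 0 := fun p => rfl
    have hG₂sel : ∀ p, G₂ p (some (Sum.inl ())) = 0 := fun p => rfl
    have hd12 : Disjoint (P₁.image G₁) (P₂.image G₂) := by
      rw [Finset.disjoint_left]
      rintro q hq1 hq2
      obtain ⟨p, hp, rfl⟩ := Finset.mem_image.mp hq1
      obtain ⟨p', hp', heq⟩ := Finset.mem_image.mp hq2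
      obtain ⟨i, hi⟩ := hspec₁ p hp
      have h := congrFun heq (some (Sum.inr (Sum.inl i)))
      simp [hG₁, hG₂, embL, embR, hi] at h
    have hq1img : qfill1 ∉ P₁.image G₁ ∪ P₂.image G₂ := by
      intro hmem
      rcases Finset.mem_union.mp hmem with h | h <;>
        · obtain ⟨p, hp, heq⟩ := Finset.mem_image.mp h
          have := congrFun heq (some (Sum.inl ()))
          simp [hG₁, hG₂, embL, embR, qfill1] at this
    have hq2img : qfill2 ∉ P₁.image G₁ ∪ P₂.image G₂ := by
      intro hmem
      rcases Finset.mem_union.mp hmem with h | h <;>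
        · obtain ⟨p, hp, heq⟩ := Finset.mem_image.mp h
          have := congrFun heq (some (Sum.inl ()))
          simp [hG₁, hG₂, embL, embR, qfill2] at this
    have hq12 : (qfill1 : Option (Unit ⊕ (ι₁ ⊕ ι₂)) → ℕ) ≠ qfill2 := by
      intro h
      have := congrFun h (some (Sum.inr (Sum.inl ne₁.some)))
      simp [qfill1, qfill2] at this
    have hdisj2 : Disjoint (P₁.image G₁ ∪ P₂.image G₂)
        ({qfill1, qfill2} : Finset (Option (Unit ⊕ (ι₁ ⊕ ι₂)) → ℕ)) := by
      rw [Finset.disjoint_right]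
      intro q hq
      rcases Finset.mem_insert.mp hq with rfl | hq
      · exact hq1img
      · rw [Finset.mem_singleton] at hq
        subst hq
        exact hq2img
    have hsum : ∀ z : (Option (Unit ⊕ (ι₁ ⊕ ι₂)) → ℕ) → ℕ,
        ∑ q ∈ (P₁.image G₁ ∪ P₂.image G₂) ∪ {qfill1, qfill2}, z q • q
          = ∑ p ∈ P₁, z (G₁ p) • G₁ p + ∑ p ∈ P₂, z (G₂ p) • G₂ p
            + (z qfill1 • qfill1 + z qfill2 • qfill2) := by
      intro z
      rw [Finset.sum_union hdisj2, Finset.sum_union hd12,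
        Finset.sum_image (fun x _ y _ h => hG₁inj h),
        Finset.sum_image (fun x _ y _ h => hG₂inj h),
        Finset.sum_pair hq12]
    refine ⟨Unit ⊕ (ι₁ ⊕ ι₂), inferInstance, ⟨Sum.inl ()⟩,
      (P₁.image G₁ ∪ P₂.image G₂) ∪ {qfill1, qfill2}, ?_, ?_, ?_, ?_⟩
    · intro q hq
      rcases Finset.mem_union.mp hq with h | h
      · rcases Finset.mem_union.mp h with h | h
        · obtain ⟨p, hp, rfl⟩ := Finset.mem_image.mp h
          obtain ⟨i, hi⟩ := hspec₁ p hp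
          exact ⟨Sum.inr (Sum.inl i), by simpa [hG₁, embL, embR] using hi⟩
        · obtain ⟨p, hp, rfl⟩ := Finset.mem_image.mp h
          obtain ⟨i, hi⟩ := hspec₂ p hp
          exact ⟨Sum.inr (Sum.inr i), by simpa [hG₂, embL, embR] using hi⟩
      · rcases Finset.mem_insert.mp h with rfl | h
        · exact ⟨Sum.inl (), rfl⟩
        · rw [Finset.mem_singleton] at h
          subst h
          exact ⟨Sum.inl (), rfl⟩
    · intro n
      constructor
      · intro hn
        rcases hn with hn | hn
        · -- n ∈ e₁.lang : use qfill2
          obtain ⟨z₁, hz₁⟩ := (hiff₁ n).mp hn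
          set zf : (Option (Unit ⊕ (ι₁ ⊕ ι₂)) → ℕ) → ℕ := fun q =>
            if q = qfill2 then 1 else
            if q ∈ P₁.image G₁ then
              z₁ (fun o => o.elim (q none) fun i => q (some (Sum.inr (Sum.inl i))))
            else 0 with hzf
          have hne2 : ∀ q ∈ P₁.image G₁ ∪ P₂.image G₂, q ≠ qfill2 := by
            intro q hq h
            subst h
            exact hq2img hq
          have hzL : ∀ p ∈ P₁, zf (G₁ p) = z₁ p := by
            intro p hp
            have hmem : G₁ p ∈ P₁.image G₁ := Finset.mem_image_of_mem _ hp
            rw [hzf]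
            simp only
            rw [if_neg (hne2 _ (Finset.mem_union_left _ hmem)), if_pos hmem]
            congr 1
            funext o
            cases o <;> rfl
          have hzR : ∀ p ∈ P₂, zf (G₂ p) = 0 := by
            intro p hp
            have hmem : G₂ p ∈ P₂.image G₂ := Finset.mem_image_of_mem _ hp
            rw [hzf]
            simp only
            rw [if_neg (hne2 _ (Finset.mem_union_right _ hmem)),
              if_neg (fun h => Finset.disjoint_left.mp hd12 h hmem)]
          have hzq1 : zf qfill1 = 0 := by
            rw [hzf]
            simp only
            rw [if_neg hq12,
              if_neg (fun h => hq1img (Finset.mem_union_left _ h))]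
          have hzq2 : zf qfill2 = 1 := by rw [hzf]; simp
          refine ⟨zf, ?_⟩
          rw [hsum]
          have hA : ∑ p ∈ P₁, zf (G₁ p) • G₁ p = ∑ p ∈ P₁, z₁ p • G₁ p :=
            Finset.sum_congr rfl fun p hp => by rw [hzL p hp]
          have hB : ∑ p ∈ P₂, zf (G₂ p) • G₂ p = 0 := by
            refine Finset.sum_eq_zero fun p hp => ?_
            rw [hzR p hp, zero_smul]
          rw [hA, hB, hzq1, hzq2, zero_smul, one_smul, add_zero, zero_add]
          funext o
          cases o with
          | none =>
            have h1 := congrFun hz₁ none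
            simp only [Tvec, Option.elim, sumv_apply] at h1
            simp only [Tvec, Option.elim, Pi.add_apply, sumv_apply, hG₁, embL, embR, qfill2]
            rw [h1, add_zero]
          | some s =>
            rcases s with _ | (i | j)
            · simp [Tvec, Pi.add_apply, sumv_apply, hG₁, embL, embR, qfill2]
            · have h1 := congrFun hz₁ (some i)
              simp only [Tvec, Option.elim, sumv_apply] at h1
              simp only [Tvec, Option.elim, Pi.add_apply, sumv_apply, hG₁, embL, embR, qfill2]
              rw [add_zero]
              exact h1
            · simp [Tvec, Pi.add_apply, sumv_apply, hG₁, embL, embR, qfill2]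
        · -- n ∈ e₂.lang : use qfill1
          obtain ⟨z₂, hz₂⟩ := (hiff₂ n).mp hn
          set zf : (Option (Unit ⊕ (ι₁ ⊕ ι₂)) → ℕ) → ℕ := fun q =>
            if q = qfill1 then 1 else
            if q ∈ P₂.image G₂ then
              z₂ (fun o => o.elim (q none) fun j => q (some (Sum.inr (Sum.inr j))))
            else 0 with hzf
          have hne1 : ∀ q ∈ P₁.image G₁ ∪ P₂.image G₂, q ≠ qfill1 := by
            intro q hq h
            subst h
            exact hq1img hq
          have hzR : ∀ p ∈ P₂, zf (G₂ p) = z₂ p := by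
            intro p hp
            have hmem : G₂ p ∈ P₂.image G₂ := Finset.mem_image_of_mem _ hp
            rw [hzf]
            simp only
            rw [if_neg (hne1 _ (Finset.mem_union_right _ hmem)), if_pos hmem]
            congr 1
            funext o
            cases o <;> rfl
          have hzL : ∀ p ∈ P₁, zf (G₁ p) = 0 := by
            intro p hp
            have hmem : G₁ p ∈ P₁.image G₁ := Finset.mem_image_of_mem _ hp
            rw [hzf]
            simp only
            rw [if_neg (hne1 _ (Finset.mem_union_left _ hmem)),
              if_neg (fun h => Finset.disjoint_right.mp hd12 h hmem)]
          have hzq2 : zf qfill2 = 0 := by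
            rw [hzf]
            simp only
            rw [if_neg (Ne.symm hq12),
              if_neg (fun h => hq2img (Finset.mem_union_right _ h))]
          have hzq1 : zf qfill1 = 1 := by rw [hzf]; simp
          refine ⟨zf, ?_⟩
          rw [hsum]
          have hB : ∑ p ∈ P₂, zf (G₂ p) • G₂ p = ∑ p ∈ P₂, z₂ p • G₂ p :=
            Finset.sum_congr rfl fun p hp => by rw [hzR p hp]
          have hA : ∑ p ∈ P₁, zf (G₁ p) • G₁ p = 0 := by
            refine Finset.sum_eq_zero fun p hp => ?_
            rw [hzL p hp, zero_smul]
          rw [hA, hB, hzq1, hzq2, zero_smul, one_smul, add_zero, zero_add]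
          funext o
          cases o with
          | none =>
            have h2 := congrFun hz₂ none
            simp only [Tvec, Option.elim, sumv_apply] at h2
            simp only [Tvec, Option.elim, Pi.add_apply, sumv_apply, hG₂, embL, embR, qfill1]
            rw [h2, add_zero]
          | some s =>
            rcases s with _ | (i | j)
            · simp [Tvec, Pi.add_apply, sumv_apply, hG₂, embL, embR, qfill1]
            · simp [Tvec, Pi.add_apply, sumv_apply, hG₂, embL, embR, qfill1]
            · have h2 := congrFun hz₂ (some j)
              simp only [Tvec, Option.elim, sumv_apply] at h2
              simp only [Tvec, Option.elim, Pi.add_apply, sumv_apply, hG₂, embL, embR, qfill1]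
              rw [add_zero]
              exact h2
      · rintro ⟨z, hz⟩
        rw [hsum] at hz
        have hsel := congrFun hz (some (Sum.inl ()))
        simp only [Tvec, Option.elim, Pi.add_apply, Pi.smul_apply, smul_eq_mul, sumv_apply,
          hG₁, hG₂, embL, embR, qfill1, qfill2, mul_zero, mul_one,
          Finset.sum_const_zero, add_zero, zero_add] at hsel
        have hselcases : (z qfill1 = 0 ∧ z qfill2 = 1) ∨ (z qfill1 = 1 ∧ z qfill2 = 0) := by
          omega
        rcases hselcases with ⟨hzq1, hzq2⟩ | ⟨hzq1, hzq2⟩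
        · -- e₁ real
          have hP₂0 : ∀ p ∈ P₂, z (G₂ p) = 0 := by
            intro p hp
            obtain ⟨j, hj⟩ := hspec₂ p hp
            have hcoord := congrFun hz (some (Sum.inr (Sum.inr j)))
            simp only [Tvec, Option.elim, Pi.add_apply, Pi.smul_apply, smul_eq_mul, sumv_apply,
              hG₁, hG₂, embL, embR, qfill1, qfill2, mul_zero, mul_one,
              Finset.sum_const_zero, add_zero, zero_add,
              hzq1, hzq2, zero_mul, one_mul] at hcoord
            have hzero := cancel_one hcoord
            have hterm := (Finset.sum_eq_zero_iff.mp hzero) p hp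
            simpa [hG₂, hj] using hterm
          refine Or.inl ((hiff₁ n).mpr ⟨fun p => z (G₁ p), ?_⟩)
          funext o
          cases o with
          | none =>
            have h0 := congrFun hz none
            simp only [Tvec, Option.elim, Pi.add_apply, Pi.smul_apply, smul_eq_mul, sumv_apply,
              hG₁, hG₂, embL, embR, qfill1, qfill2, mul_zero, add_zero] at h0
            have h2 : ∑ p ∈ P₂, z (embR (embR p)) * p none = 0 :=
              Finset.sum_eq_zero fun p hp => by
                rw [show z (embR (embR p)) = 0 from by simpa [hG₂] using hP₂0 p hp, zero_mul]
            rw [h2, add_zero] at h0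
            simp only [Tvec, Option.elim, sumv_apply, hG₁, embL, embR]
            exact h0
          | some i =>
            have hc := congrFun hz (some (Sum.inr (Sum.inl i)))
            simp only [Tvec, Option.elim, Pi.add_apply, Pi.smul_apply, smul_eq_mul, sumv_apply,
              hG₁, hG₂, embL, embR, qfill1, qfill2, mul_zero, mul_one,
              Finset.sum_const_zero, add_zero, zero_add,
              hzq1, hzq2, zero_mul, one_mul] at hc
            simp only [Tvec, Option.elim, sumv_apply, hG₁, embL, embR]
            exact hc
        · -- e₂ real
          have hP₁0 : ∀ p ∈ P₁, z (G₁ p) = 0 := by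
            intro p hp
            obtain ⟨i, hi⟩ := hspec₁ p hp
            have hcoord := congrFun hz (some (Sum.inr (Sum.inl i)))
            simp only [Tvec, Option.elim, Pi.add_apply, Pi.smul_apply, smul_eq_mul, sumv_apply,
              hG₁, hG₂, embL, embR, qfill1, qfill2, mul_zero, mul_one,
              Finset.sum_const_zero, add_zero, zero_add,
              hzq1, hzq2, zero_mul, one_mul] at hcoord
            have hzero := cancel_one hcoord
            have hterm := (Finset.sum_eq_zero_iff.mp hzero) p hp
            simpa [hG₁, hi] using hterm
          refine Or.inr ((hiff₂ n).mpr ⟨fun p => z (G₂ p), ?_⟩)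
          funext o
          cases o with
          | none =>
            have h0 := congrFun hz none
            simp only [Tvec, Option.elim, Pi.add_apply, Pi.smul_apply, smul_eq_mul, sumv_apply,
              hG₁, hG₂, embL, embR, qfill1, qfill2, mul_zero, add_zero] at h0
            have h1 : ∑ p ∈ P₁, z (embR (embL p)) * p none = 0 :=
              Finset.sum_eq_zero fun p hp => by
                rw [show z (embR (embL p)) = 0 from by simpa [hG₁] using hP₁0 p hp, zero_mul]
            rw [h1, zero_add] at h0
            simp only [Tvec, Option.elim, sumv_apply, hG₂, embL, embR]
            exact h0
          | some j =>
            have hc := congrFun hz (some (Sum.inr (Sum.inr j)))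
            simp only [Tvec, Option.elim, Pi.add_apply, Pi.smul_apply, smul_eq_mul, sumv_apply,
              hG₁, hG₂, embL, embR, qfill1, qfill2, mul_zero, mul_one,
              Finset.sum_const_zero, add_zero, zero_add,
              hzq1, hzq2, zero_mul, one_mul] at hc
            simp only [Tvec, Option.elim, sumv_apply, hG₂, embL, embR]
            exact hc
    · have h1 : Fintype.card ι₁ ≤ 2 * e₁.ops + 1 := hcard₁
      have h2 : Fintype.card ι₂ ≤ 2 * e₂.ops + 1 := hcard₂
      simp only [Fintype.card_sum, Fintype.card_unit, IntExpr.ops]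
      omega
    · have c1 := Finset.card_image_le (s := P₁) (f := G₁)
      have c2 := Finset.card_image_le (s := P₂) (f := G₂)
      have cu := Finset.card_union_le (P₁.image G₁) (P₂.image G₂)
      have cu2 := Finset.card_union_le (P₁.image G₁ ∪ P₂.image G₂)
        ({qfill1, qfill2} : Finset (Option (Unit ⊕ (ι₁ ⊕ ι₂)) → ℕ))
      have cpair : ({qfill1, qfill2} : Finset (Option (Unit ⊕ (ι₁ ⊕ ι₂)) → ℕ)).card ≤ 2 :=
        (Finset.card_insert_le _ _).trans (by simp)
      have h1 := hPc₁; have h2 := hPc₂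
      simp only [IntExpr.ops]
      omega

/-- for every integer expression `e` there is a linear set `C(0,P) ⊆ ℕ^{1+d}`
(all period vectors having a coordinate equal to `1` among the last `d` coordinates) with
`n ∈ L(e) ↔ (n,1,…,1) ∈ C(0,P)`, where `d` and `|P|` are linear in the number of
operators of `e`. -/
theorem intExpr_to_linear_set :
    ∃ c : ℕ, ∀ e : IntExpr, ∃ (d : ℕ) (P : Finset (Fin (d + 1) → ℕ)),
      (∀ p ∈ P, ∃ i : Fin (d + 1), i ≠ 0 ∧ p i = 1) ∧
      (∀ n : ℕ, n ∈ e.lang ↔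
        (fun i : Fin (d + 1) => if i = 0 then n else 1) ∈ LinSet 0 P) ∧
      d ≤ c * (e.ops + 1) ∧ P.card ≤ c * (e.ops + 1) := by
  classical
  refine ⟨3, fun e => ?_⟩
  obtain ⟨ι, Fι, neι, P, hspec, hiff, hcard, hPc⟩ := intExpr_key e
  set d := Fintype.card ι with hd
  set σ : Fin (d + 1) ≃ Option ι :=
    (finSuccEquiv d).trans (Equiv.optionCongr (Fintype.equivFin ι).symm) with hσ
  have hσ0 : σ 0 = none := by simp [hσ]
  refine ⟨d, P.image (fun p => p ∘ σ), ?_, ?_, ?_, ?_⟩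
  · intro q hq
    obtain ⟨p, hp, rfl⟩ := Finset.mem_image.mp hq
    obtain ⟨i, hi⟩ := hspec p hp
    refine ⟨σ.symm (some i), ?_, ?_⟩
    · intro h
      have : σ (σ.symm (some i)) = σ 0 := by rw [h]
      rw [Equiv.apply_symm_apply, hσ0] at this
      exact Option.some_ne_none i this
    · show p (σ (σ.symm (some i))) = 1
      rw [Equiv.apply_symm_apply]
      exact hi
  · intro n
    have hvec : (fun i : Fin (d + 1) => if i = 0 then n else 1) = Tvec n ∘ σ := by
      funext i
      by_cases h : i = 0
      · subst h
        simp [Tvec, hσ0]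
      · have : σ i ≠ none := by
          intro hnone
          exact h (σ.injective (hnone.trans hσ0.symm))
        obtain ⟨j, hj⟩ := Option.ne_none_iff_exists'.mp this
        simp [Tvec, h, hj]
    rw [hiff n, hvec]
    have : ∀ v : Fin (d + 1) → ℕ,
        v ∈ LinSet 0 (P.image (fun p => p ∘ σ)) ↔ v ∈ GLin (P.image (fun p => p ∘ σ)) := by
      intro v
      unfold LinSet GLin
      simp [zero_add]
    rw [this]
    exact (glin_reindex σ P (Tvec n)).symm
  · have : d ≤ 2 * e.ops + 1 := hcard
    omega
  · have h1 : P.card ≤ 3 * e.ops + 1 := hPc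
    have h2 := Finset.card_image_le (s := P) (f := fun p => p ∘ σ)
    omega
end

section
/- The ω-language L_{a=b} ∩ L_{2a=b}, where L_{a=b} = {α ∈ {a,b}^ω | |α[1:i]|_a = |α[1:i]|_b for infinitely many i} and L_{2a=b} = {α | 2|α[1:i]|_a = |α[1:i]|_b for infinitely many i}, contains no ultimately periodic word and hence is not recognized by any weak reset Parikh automaton; therefore deterministic weak reset PA languages are not closed under intersection. -/
/-- `L_{a=b}`: infinitely many prefixes with `|·|_a = |·|_b`
(alphabet `{a,b} = Bool`, `a := true`, `b := false`). -/
def L18ab : Set (ℕ → Bool) :=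
  {α | ∀ m, ∃ i, m ≤ i ∧ (pref α i).count true = (pref α i).count false}

/-- `L_{2a=b}`: infinitely many prefixes with `2|·|_a = |·|_b`. -/
def L182ab : Set (ℕ → Bool) :=
  {α | ∀ m, ∃ i, m ≤ i ∧ 2 * (pref α i).count true = (pref α i).count false}


/-! ### Auxiliary development -/

section Aux

/-- Number of `true`s in the length-`i` prefix. -/
def cnt (α : ℕ → Bool) (i : ℕ) : ℕ := (pref α i).count true

lemma pref_succ (α : ℕ → Bool) (i : ℕ) :
    pref α (i + 1) = pref α i ++ [α i] := by
  simp only [pref]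
  rw [List.ofFn_succ']
  simp [List.concat_eq_append, Fin.castSucc]

lemma cnt_succ (α : ℕ → Bool) (i : ℕ) :
    cnt α (i + 1) = cnt α i + (if α i then 1 else 0) := by
  simp only [cnt, pref_succ, List.count_append]
  cases h : α i <;> simp [List.count_cons, h]

lemma cnt_zero (α : ℕ → Bool) : cnt α 0 = 0 := by simp [cnt, pref]

lemma cnt_mono (α : ℕ → Bool) : Monotone (cnt α) := by
  apply monotone_nat_of_le_succ
  intro n; rw [cnt_succ]; split <;> omega

lemma cnt_add_countFalse (α : ℕ → Bool) (i : ℕ) :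
    cnt α i + (pref α i).count false = i := by
  induction i with
  | zero => simp [cnt, pref]
  | succ n ih =>
      rw [cnt_succ, pref_succ, List.count_append]
      cases h : α n <;> simp [List.count_cons, h] <;> omega

lemma cond_ab (α : ℕ → Bool) (i : ℕ) :
    (pref α i).count true = (pref α i).count false ↔ 2 * cnt α i = i := by
  have := cnt_add_countFalse α i
  unfold cnt at *
  omega

lemma cond_2ab (α : ℕ → Bool) (i : ℕ) :
    2 * (pref α i).count true = (pref α i).count false ↔ 3 * cnt α i = i := by
  have := cnt_add_countFalse α i
  unfold cnt at *
  omega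

lemma periodic_cnt {α : ℕ → Bool} {n p : ℕ}
    (h : ∀ i, n ≤ i → α (i + p) = α i) :
    ∀ i, n ≤ i → cnt α (i + p) = cnt α i + (cnt α (n + p) - cnt α n) := by
  have hq : cnt α n ≤ cnt α (n + p) := cnt_mono α (Nat.le_add_right n p)
  intro i hi
  induction i with
  | zero =>
      have : n = 0 := Nat.le_zero.mp hi
      subst this; omega
  | succ m ih =>
      rcases Nat.lt_or_ge n (m + 1) with hn | hn
      · have hm : n ≤ m := by omega
        have := ih hm
        have e1 : cnt α (m + 1 + p) = cnt α (m + p) + (if α (m + p) then 1 else 0) := by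
          have := cnt_succ α (m + p); convert this using 2; omega
        have e2 : cnt α (m + 1) = cnt α m + (if α m then 1 else 0) := cnt_succ α m
        rw [e1, e2, h m hm, this]; omega
      · have : n = m + 1 := by omega
        subst this; omega

lemma periodic_cnt_iter {α : ℕ → Bool} {n p q : ℕ}
    (h : ∀ i, n ≤ i → cnt α (i + p) = cnt α i + q) :
    ∀ t i, n ≤ i → cnt α (i + t * p) = cnt α i + t * q := by
  intro t
  induction t with
  | zero => simp
  | succ s ih =>
      intro i hi
      have e : i + (s + 1) * p = (i + s * p) + p := by ring
      rw [e, h (i + s * p) (by omega), ih i hi]; ring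

/-- Key density lemma: if `cnt` grows by `q` per period `p` eventually, and
`c * cnt i = i` for infinitely many `i`, then `c * q = p`. -/
lemma key_ratio {α : ℕ → Bool} {n p q c : ℕ} (hp : 0 < p)
    (hper : ∀ i, n ≤ i → cnt α (i + p) = cnt α i + q)
    (hinf : ∀ m, ∃ i, m ≤ i ∧ c * cnt α i = i) : c * q = p := by
  obtain ⟨i₁, hi₁, he₁⟩ := hinf n
  obtain ⟨i₂, hi₂, he₂⟩ := hinf (i₁ + (p + c * q + 1) * p)
  set t := (i₂ - i₁) / p with ht
  set r := (i₂ - i₁) % p with hr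
  have hdm : p * t + r = i₂ - i₁ := Nat.div_add_mod (i₂ - i₁) p
  have hrp : r < p := Nat.mod_lt _ hp
  have hle : i₁ ≤ i₂ := by omega
  have hi2e : i₂ = i₁ + p * t + r := by omega
  have htlarge : p + c * q + 1 ≤ t := by
    have : (p + c * q + 1) * p ≤ i₂ - i₁ := by omega
    have h2 : (p + c * q + 1) * p ≤ p * t + r := by omega
    by_contra hcon
    push_neg at hcon
    have : p * t + r < (p + c * q + 1) * p := by
      calc p * t + r < p * t + p := by omega
        _ = p * (t + 1) := by ring
        _ ≤ p * (p + c * q + 1) := by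
            apply Nat.mul_le_mul_left; omega
        _ = (p + c * q + 1) * p := by ring
    omega
  have hcomm : t * p = p * t := Nat.mul_comm t p
  have hcomm2 : (t + 1) * p = p * t + p := by ring
  have hlow : cnt α i₁ + t * q ≤ cnt α i₂ := by
    have := periodic_cnt_iter hper t i₁ hi₁
    have hm := cnt_mono α (show i₁ + t * p ≤ i₂ by omega)
    omega
  have hhigh : cnt α i₂ ≤ cnt α i₁ + (t + 1) * q := by
    have := periodic_cnt_iter hper (t + 1) i₁ hi₁
    have hm := cnt_mono α (show i₂ ≤ i₁ + (t + 1) * p by omega)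
    omega
  -- multiply by c
  have hc1 : c * cnt α i₁ + c * (t * q) ≤ i₂ := by
    calc c * cnt α i₁ + c * (t * q) = c * (cnt α i₁ + t * q) := by ring
      _ ≤ c * cnt α i₂ := Nat.mul_le_mul_left c hlow
      _ = i₂ := he₂
  have hc2 : i₂ ≤ c * cnt α i₁ + c * ((t + 1) * q) := by
    calc i₂ = c * cnt α i₂ := he₂.symm
      _ ≤ c * (cnt α i₁ + (t + 1) * q) := Nat.mul_le_mul_left c hhigh
      _ = c * cnt α i₁ + c * ((t + 1) * q) := by ring
  rw [he₁] at hc1 hc2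
  rw [hi2e] at hc1 hc2
  -- hc1 : i₁ + c*t*q ≤ i₁ + p*t + r ; hc2 : i₁ + p*t + r ≤ i₁ + c*(t+1)*q
  rcases lt_trichotomy (c * q) p with hlt | heq | hgt
  · exfalso
    -- p*t ≤ c*t*q + c*q ; p ≥ c*q+1 so t*(c*q+1) ≤ p*t ≤ c*t*q+c*q → t ≤ c*q
    have h1 : p * t + r ≤ c * ((t + 1) * q) := by omega
    have h2 : t * (c * q + 1) ≤ p * t := by
      have : c * q + 1 ≤ p := hlt
      calc t * (c * q + 1) ≤ t * p := Nat.mul_le_mul_left t this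
        _ = p * t := Nat.mul_comm t p
    have h3 : c * ((t + 1) * q) = t * (c * q) + c * q := by ring
    have : t * (c * q) + t ≤ t * (c * q) + c * q := by
      have : t * (c * q + 1) = t * (c * q) + t := by ring
      omega
    omega
  · exact heq
  · exfalso
    -- c*t*q ≤ p*t + r < p*t + p ; c*q ≥ p+1 so t*(p+1) ≤ t*(c*q) = c*t*q
    have h1 : c * (t * q) ≤ p * t + r := by omega
    have h2 : t * (p + 1) ≤ t * (c * q) := Nat.mul_le_mul_left t hgt
    have h3 : c * (t * q) = t * (c * q) := by ring
    have h4 : t * (p + 1) = p * t + t := by ring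
    omega

/-- Part (a): no ultimately periodic word lies in the intersection. -/
lemma no_up (α : ℕ → Bool) (h1 : α ∈ L18ab) (h2 : α ∈ L182ab) :
    ¬ UltimatelyPeriodic α := by
  rintro ⟨n, p, hp, hper⟩
  have hpc := periodic_cnt hper
  set q := cnt α (n + p) - cnt α n with hq
  have k2 : 2 * q = p := by
    apply key_ratio hp hpc
    intro m
    obtain ⟨i, him, hie⟩ := h1 m
    exact ⟨i, him, (cond_ab α i).mp hie⟩
  have k3 : 3 * q = p := by
    apply key_ratio hp hpc
    intro m
    obtain ⟨i, him, hie⟩ := h2 m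
    exact ⟨i, him, (cond_2ab α i).mp hie⟩
  omega

end Aux


/-! ### An explicit word in the intersection -/

/-- The word `T F | F T | F F T T | F F F F T T T T | ...`. -/
def myW (i : ℕ) : Bool := if i = 0 then true else decide (3 * 2 ^ (Nat.log 2 i - 1) ≤ i)

/-- Count of `true`s in the length-`i` prefix of `myW`. -/
def myF (i : ℕ) : ℕ :=
  if i = 0 then 0 else
    if i ≤ 3 * 2 ^ (Nat.log 2 i - 1) then 2 ^ (Nat.log 2 i - 1)
    else i - 2 ^ Nat.log 2 i

lemma myF_succ (i : ℕ) : myF (i + 1) = myF i + (if myW i then 1 else 0) := by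
  rcases Nat.eq_zero_or_pos i with h0 | hpos
  · subst h0; simp [myF, myW]
  obtain ⟨J, hJ⟩ : ∃ J, Nat.log 2 i = J := ⟨_, rfl⟩
  have hJl : 2 ^ J ≤ i := hJ ▸ Nat.pow_log_le_self 2 (by omega)
  have hJu : i < 2 ^ (J + 1) := hJ ▸ Nat.lt_pow_succ_log_self (by norm_num) i
  have hpow1 : (0:ℕ) < 2 ^ (J - 1) := Nat.pow_pos (by norm_num)
  have hAB : (J = 0 ∧ 2 ^ (J - 1) = 1 ∧ 2 ^ J = 1) ∨ 2 ^ J = 2 * 2 ^ (J - 1) := by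
    rcases Nat.eq_zero_or_pos J with h | h
    · subst h; left; simp
    · right
      conv_lhs => rw [show J = (J - 1) + 1 by omega]
      ring
  have hWi : myW i = decide (3 * 2 ^ (J - 1) ≤ i) := by
    rw [myW, if_neg hpos.ne', hJ]
  rw [hWi]
  simp only [decide_eq_true_eq]
  rcases Nat.lt_or_ge (i + 1) (2 ^ (J + 1)) with hlt | hge
  · have hJ' : Nat.log 2 (i + 1) = J :=
      Nat.log_eq_of_pow_le_of_lt_pow (by omega) hlt
    simp only [myF, hJ, hJ']
    rw [if_neg (show ¬ (i + 1 = 0) by omega), if_neg (show ¬ (i = 0) by omega)]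
    split_ifs <;> omega
  · have hEq : i + 1 = 2 ^ (J + 1) := by omega
    have hJ'' : Nat.log 2 (i + 1) = J + 1 := by
      rw [hEq, Nat.log_pow (by norm_num)]
    have hpow2 : 2 ^ (J + 1) = 2 * 2 ^ J := by ring
    simp only [myF, hJ, hJ'', Nat.add_sub_cancel]
    rw [if_neg (show ¬ (i + 1 = 0) by omega), if_neg (show ¬ (i = 0) by omega)]
    split_ifs <;> omega

lemma cnt_myW (i : ℕ) : cnt myW i = myF i := by
  induction i with
  | zero => simp [cnt_zero, myF]
  | succ n ih => rw [cnt_succ, ih, myF_succ]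

lemma myW_mem1 : myW ∈ L18ab := by
  intro m
  refine ⟨2 ^ (m + 1), (Nat.lt_two_pow_self (n := m)).le.trans
    (Nat.pow_le_pow_right (by norm_num) (by omega)), ?_⟩
  rw [cond_ab, cnt_myW]
  have hJ : Nat.log 2 (2 ^ (m + 1)) = m + 1 := Nat.log_pow (by norm_num) _
  have hpow : (2:ℕ) ^ (m + 1) = 2 * 2 ^ m := by ring
  simp only [myF, hJ, Nat.add_sub_cancel]
  rw [if_neg (by positivity), if_pos (by omega)]
  omega

lemma myW_mem2 : myW ∈ L182ab := by
  intro m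
  have h2 : (0:ℕ) < 2 ^ m := Nat.pow_pos (by norm_num)
  refine ⟨3 * 2 ^ m, by have := Nat.lt_two_pow_self (n := m); omega, ?_⟩
  rw [cond_2ab, cnt_myW]
  have hpow : (2:ℕ) ^ (m + 1) = 2 * 2 ^ m := by ring
  have hpow2 : (2:ℕ) ^ (m + 1 + 1) = 4 * 2 ^ m := by ring
  have hJ : Nat.log 2 (3 * 2 ^ m) = m + 1 :=
    Nat.log_eq_of_pow_le_of_lt_pow (by omega) (by omega)
  simp only [myF, hJ, Nat.add_sub_cancel]
  rw [if_neg (by positivity), if_pos (by omega)]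


/-! ### Deterministic weak reset PAs for the two languages -/

/-- The counting automaton: one state, emits `(1,0)` on `true`, `(0,1)` on `false`. -/
def cntPA (C : Set (Fin 2 → ℕ)) : DetPA Unit Bool 2 ℕ where
  init := ()
  trans := fun _ x => (if x then ![1, 0] else ![0, 1], ())
  acc := fun _ => True
  C := C

lemma cntPA_step (C : Set (Fin 2 → ℕ)) (α : ℕ → Bool) (i : ℕ) :
    (cntPA C).step α i = if α i then ![1, 0] else ![0, 1] := rfl

lemma cntPA_vecSum0 (C : Set (Fin 2 → ℕ)) (α : ℕ → Bool) (m n : ℕ) (h : m ≤ n) :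
    cnt α m + (cntPA C).vecSum α m n 0 = cnt α n := by
  induction n with
  | zero =>
      have : m = 0 := by omega
      subst this
      simp [DetPA.vecSum]
  | succ k ih =>
      rcases Nat.lt_or_ge m (k + 1) with h2 | h2
      · have hm : m ≤ k := by omega
        have := ih hm
        unfold DetPA.vecSum at *
        rw [Finset.sum_Ico_succ_top hm]
        simp only [Finset.sum_apply, Pi.add_apply] at *
        rw [cnt_succ]
        rw [cntPA_step]
        cases h3 : α k <;> simp [h3] <;> omega
      · have : m = k + 1 := by omega
        subst this
        simp [DetPA.vecSum]

lemma cntPA_vecSum_tot (C : Set (Fin 2 → ℕ)) (α : ℕ → Bool) (m n : ℕ) (h : m ≤ n) :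
    m + ((cntPA C).vecSum α m n 0 + (cntPA C).vecSum α m n 1) = n := by
  induction n with
  | zero =>
      have : m = 0 := by omega
      subst this
      simp [DetPA.vecSum]
  | succ k ih =>
      rcases Nat.lt_or_ge m (k + 1) with h2 | h2
      · have hm : m ≤ k := by omega
        have := ih hm
        unfold DetPA.vecSum at *
        rw [Finset.sum_Ico_succ_top hm]
        simp only [Finset.sum_apply, Pi.add_apply] at *
        rw [cntPA_step]
        cases h3 : α k <;> simp [h3] <;> omega
      · have : m = k + 1 := by omega
        subst this
        simp [DetPA.vecSum]

/-- Semi-linearity of `{v | a * v 0 = v 1}`. -/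
lemma semiLin_ratio (a : ℕ) : SemiLin {v : Fin 2 → ℕ | a * v 0 = v 1} := by
  refine ⟨1, fun _ => 0, fun _ => {![1, a]}, ?_⟩
  ext v
  simp only [Set.mem_setOf_eq, Set.mem_iUnion, LinSet, Finset.sum_singleton]
  constructor
  · intro h
    refine ⟨0, fun _ => v 0, ?_⟩
    funext j
    fin_cases j
    · simp
    · show v 1 = 0 + v 0 * ![1, a] 1
      rw [← h]
      simp [mul_comm]
  · rintro ⟨_, z, hz⟩
    subst hz
    simp [mul_comm]

/-- Generic recognizability of the ratio languages. -/
lemma cntPA_recog (a : ℕ) (ha : 0 < a) :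
    {α : ℕ → Bool | ∀ m, ∃ i, m ≤ i ∧ (a + 1) * cnt α i = i}
      = {α | (cntPA {v : Fin 2 → ℕ | a * v 0 = v 1}).WeakResetAccept α} := by
  set A := cntPA {v : Fin 2 → ℕ | a * v 0 = v 1} with hA
  ext α
  simp only [Set.mem_setOf_eq]
  constructor
  · intro h
    choose g hg1 hg2 using h
    set k : ℕ → ℕ := fun n => Nat.rec 0 (fun _ prev => g (prev + 1)) n with hk
    have hksucc : ∀ n, k (n + 1) = g (k n + 1) := fun n => rfl
    have hk0 : k 0 = 0 := rfl
    have hkmono : StrictMono k := strictMono_nat_of_lt_succ (fun n => by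
      have := hg1 (k n + 1); rw [hksucc]; omega)
    have hkn : ∀ n, (a + 1) * cnt α (k n) = k n := by
      intro n
      cases n with
      | zero => rw [hk0, cnt_zero]; simp
      | succ m => rw [hksucc]; exact hg2 _
    refine ⟨k, hk0, hkmono, fun _ => trivial, ?_⟩
    intro n
    have hle : k n ≤ k (n + 1) := (hkmono (Nat.lt_succ_self n)).le
    have h0 := cntPA_vecSum0 {v : Fin 2 → ℕ | a * v 0 = v 1} α (k n) (k (n + 1)) hle
    have h1 := cntPA_vecSum_tot {v : Fin 2 → ℕ | a * v 0 = v 1} α (k n) (k (n + 1)) hle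
    have e0 := hkn n
    have e1 := hkn (n + 1)
    rw [← hA] at h0 h1
    show a * A.vecSum α (k n) (k (n + 1)) 0 = A.vecSum α (k n) (k (n + 1)) 1
    have e : (a + 1) * cnt α (k (n + 1)) =
        (a + 1) * cnt α (k n) + (a + 1) * A.vecSum α (k n) (k (n + 1)) 0 := by
      rw [← h0]; ring
    have e2 : (a + 1) * A.vecSum α (k n) (k (n + 1)) 0 =
        A.vecSum α (k n) (k (n + 1)) 0 + a * A.vecSum α (k n) (k (n + 1)) 0 := by ring
    linarith [e0, e1, h0, h1, e, e2]
  · rintro ⟨k, hk0, hkmono, -, hkC⟩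
    have hkn : ∀ n, (a + 1) * cnt α (k n) = k n := by
      intro n
      induction n with
      | zero => rw [hk0, cnt_zero]; simp
      | succ m ih =>
          have hle : k m ≤ k (m + 1) := (hkmono (Nat.lt_succ_self m)).le
          have h0 := cntPA_vecSum0 {v : Fin 2 → ℕ | a * v 0 = v 1} α (k m) (k (m + 1)) hle
          have h1 := cntPA_vecSum_tot {v : Fin 2 → ℕ | a * v 0 = v 1} α (k m) (k (m + 1)) hle
          have hC := hkC m
          rw [← hA] at h0 h1
          have hC' : a * A.vecSum α (k m) (k (m + 1)) 0 = A.vecSum α (k m) (k (m + 1)) 1 :=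
            hC
          have e : (a + 1) * cnt α (k (m + 1)) =
              (a + 1) * cnt α (k m) + (a + 1) * A.vecSum α (k m) (k (m + 1)) 0 := by
            rw [← h0]; ring
          have e2 : (a + 1) * A.vecSum α (k m) (k (m + 1)) 0 =
              A.vecSum α (k m) (k (m + 1)) 0 + a * A.vecSum α (k m) (k (m + 1)) 0 := by ring
          linarith [ih, h0, h1, hC', e, e2]
    intro m
    exact ⟨k m, hkmono.le_apply, hkn m⟩

lemma recog_L18ab : DetWeakResetRecog L18ab := by
  refine ⟨2, Unit, inferInstance, cntPA {v : Fin 2 → ℕ | 1 * v 0 = v 1},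
    semiLin_ratio 1, ?_⟩
  rw [← cntPA_recog 1 (by norm_num)]
  ext α
  simp only [L18ab, Set.mem_setOf_eq]
  constructor <;> intro h m <;> obtain ⟨i, h1, h2⟩ := h m <;> refine ⟨i, h1, ?_⟩
  · have := (cond_ab α i).mp h2; omega
  · rw [cond_ab]; omega

lemma recog_L182ab : DetWeakResetRecog L182ab := by
  refine ⟨2, Unit, inferInstance, cntPA {v : Fin 2 → ℕ | 2 * v 0 = v 1},
    semiLin_ratio 2, ?_⟩
  rw [← cntPA_recog 2 (by norm_num)]
  ext α
  simp only [L182ab, Set.mem_setOf_eq]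
  constructor <;> intro h m <;> obtain ⟨i, h1, h2⟩ := h m <;> refine ⟨i, h1, ?_⟩
  · have := (cond_2ab α i).mp h2; omega
  · rw [cond_2ab]; omega


/-! ### Pumping: a weak-reset-accepted word yields an ultimately periodic accepted word -/

lemma NPA.pump {Q S : Type} [Finite Q] {d : ℕ} (A : NPA Q S d) (α : ℕ → S)
    (h : A.WeakResetAccept α) :
    ∃ β, UltimatelyPeriodic β ∧ A.WeakResetAccept β := by
  obtain ⟨r, v, ⟨hr0, hrt⟩, k, hk0, hkm, hacc, hC⟩ := h
  obtain ⟨i, j, hij, hi1, heq⟩ : ∃ i j, i < j ∧ 1 ≤ i ∧ r (k i) = r (k j) := by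
    obtain ⟨x, y, hxy, hfeq⟩ :=
      Finite.exists_ne_map_eq_of_infinite (fun m : ℕ => r (k (m + 1)))
    rcases hxy.lt_or_gt with hlt | hlt
    · exact ⟨x + 1, y + 1, by omega, by omega, hfeq⟩
    · exact ⟨y + 1, x + 1, by omega, by omega, hfeq.symm⟩
  set a := k i with ha
  set b := k j with hb
  have hab : a < b := hkm hij
  set p := b - a with hpdef
  have hp : 0 < p := by omega
  have hpb : a + p = b := by omega
  have ha1 : 1 ≤ a := le_trans hi1 hkm.le_apply
  have hreq : r a = r b := heq
  set β := (fun m => if m < a then α m else α (a + (m - a) % p)) with hβ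
  set v' := (fun m => if m < a then v m else v (a + (m - a) % p)) with hv'
  set r' := (fun m => if m < a then r m else r (a + (m - a) % p)) with hr'
  -- values of the primed run below / at `a`
  have hrlow : ∀ m, m ≤ a → r' m = r m := by
    intro m hm
    rcases Nat.lt_or_ge m a with h1 | h1
    · simp only [hr']; rw [if_pos h1]
    · have : m = a := by omega
      subst this
      simp only [hr']; rw [if_neg (by omega)]
      simp
  -- the transition relation for the primed run
  have hrun' : ∀ m, A.trans (r' m) (β m) (v' m) (r' (m + 1)) := by
    intro m
    rcases Nat.lt_or_ge m a with hm | hm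
    · have hβm : β m = α m := by simp only [hβ]; rw [if_pos hm]
      have hvm : v' m = v m := by simp only [hv']; rw [if_pos hm]
      have hrm : r' m = r m := hrlow m (by omega)
      have hrm1 : r' (m + 1) = r (m + 1) := hrlow (m + 1) (by omega)
      rw [hβm, hvm, hrm, hrm1]
      exact hrt m
    · obtain ⟨s, hs⟩ : ∃ s, (m - a) % p = s := ⟨_, rfl⟩
      have hsp : s < p := hs ▸ Nat.mod_lt _ hp
      have hβm : β m = α (a + s) := by simp only [hβ]; rw [if_neg (by omega), hs]
      have hvm : v' m = v (a + s) := by simp only [hv']; rw [if_neg (by omega), hs]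
      have hrm : r' m = r (a + s) := by simp only [hr']; rw [if_neg (by omega), hs]
      have hmod : (m + 1 - a) % p = if s + 1 = p then 0 else s + 1 := by
        have h1 : (s + 1) % p = (m + 1 - a) % p := by
          rw [← hs, show m + 1 - a = m - a + 1 by omega]
          exact Nat.mod_add_mod (m - a) p 1
        split_ifs with hcase
        · rw [← h1, hcase, Nat.mod_self]
        · rw [← h1, Nat.mod_eq_of_lt (by omega)]
      have hrm1 : r' (m + 1) = r (a + ((m + 1 - a) % p)) := by
        simp only [hr']; rw [if_neg (by omega)]
      rw [hβm, hvm, hrm]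
      rw [hrm1, hmod]
      split_ifs with hcase
      · have : r (a + 0) = r (a + s + 1) := by
          rw [show a + 0 = a by omega, hreq, show a + s + 1 = b by omega]
        rw [this]
        exact hrt (a + s)
      · rw [show a + (s + 1) = a + s + 1 by omega]
        exact hrt (a + s)
  -- shifting sums by whole periods
  have hshift : ∀ t x y, a ≤ x → x ≤ y → y ≤ b →
      NPA.partSum v' (p * t + x) (p * t + y) = NPA.partSum v x y := by
    intro t x y hax hxy hyb
    unfold NPA.partSum
    rw [Finset.sum_Ico_eq_sum_range, Finset.sum_Ico_eq_sum_range,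
      show p * t + y - (p * t + x) = y - x by omega]
    apply Finset.sum_congr rfl
    intro u hu
    rw [Finset.mem_range] at hu
    have h2 : v' (p * t + x + u) = v (a + (p * t + x + u - a) % p) := by
      simp only [hv']; rw [if_neg (by omega)]
    rw [h2, show p * t + x + u - a = p * t + (x + u - a) by omega,
      Nat.mul_add_mod, Nat.mod_eq_of_lt (by omega),
      show a + (x + u - a) = x + u by omega]
  -- `v'` agrees with `v` below `a`
  have hlowsum : ∀ x y, y ≤ a → NPA.partSum v' x y = NPA.partSum v x y := by
    intro x y hy
    unfold NPA.partSum
    apply Finset.sum_congr rfl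
    intro z hz
    rw [Finset.mem_Ico] at hz
    simp only [hv']; rw [if_pos (by omega)]
  -- the new reset sequence
  set D := j - i with hD
  have hD0 : 0 < D := by omega
  set K := (fun m => p * (m / D) + k (i + m % D)) with hK
  set k' := (fun n => if n ≤ i then k n else K (n - i)) with hk'
  have hK0 : K 0 = k i := by simp [hK]
  have hKi : ∀ n, i ≤ n → k' n = K (n - i) := by
    intro n hn
    rcases Nat.lt_or_ge i n with h1 | h1
    · simp only [hk']; rw [if_neg (by omega)]
    · have : n = i := by omega
      subst this
      simp only [hk']; rw [if_pos le_rfl, show n - n = 0 by omega, hK0]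
  have hKvals : ∀ m, ∃ t s, t = m / D ∧ s = m % D ∧ s < D ∧ K m = p * t + k (i + s) ∧
      ((s + 1 = D ∧ K (m + 1) = p * t + b) ∨
       (s + 1 < D ∧ K (m + 1) = p * t + k (i + s + 1))) := by
    intro m
    refine ⟨m / D, m % D, rfl, rfl, Nat.mod_lt _ hD0, by simp only [hK], ?_⟩
    have hdm := Nat.div_add_mod m D
    rcases eq_or_lt_of_le (Nat.succ_le_of_lt (Nat.mod_lt m hD0)) with hcase | hcase
    · left
      refine ⟨hcase, ?_⟩
      have hexp : D * (m / D + 1) = D * (m / D) + D := by ring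
      have he : m + 1 = D * (m / D + 1) := by omega
      have hdiv : (m + 1) / D = m / D + 1 := by
        rw [he, Nat.mul_div_cancel_left _ hD0]
      have hmod : (m + 1) % D = 0 := by rw [he]; exact Nat.mul_mod_right D _
      simp only [hK]
      rw [hdiv, hmod, show i + 0 = i by omega, ← ha,
        show p * (m / D + 1) = p * (m / D) + p by ring]
      omega
    · right
      refine ⟨hcase, ?_⟩
      have he : m + 1 = D * (m / D) + (m % D + 1) := by omega
      have hdiv : (m + 1) / D = m / D := by
        rw [he, Nat.mul_add_div hD0,
          Nat.div_eq_of_lt (show m % D + 1 < D by omega)]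
        omega
      have hmod : (m + 1) % D = m % D + 1 := by
        rw [he, Nat.mul_add_mod, Nat.mod_eq_of_lt (by omega)]
      simp only [hK]
      rw [hdiv, hmod, show i + (m % D + 1) = i + m % D + 1 by omega]
  have hKb : ∀ s, s < D → a ≤ k (i + s) ∧ k (i + s) < b := by
    intro s hsD
    constructor
    · exact hkm.monotone (by omega)
    · exact hkm (by omega)
  -- the primed run at reset points
  have hrK : ∀ m, r' (K m) = r (k (i + m % D)) := by
    intro m
    obtain ⟨t, s, ht, hs, hsD, hKm, -⟩ := hKvals m
    obtain ⟨hge, hlt⟩ := hKb s hsD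
    rw [hKm, ← hs]
    simp only [hr']; rw [if_neg (by omega)]
    congr 1
    rw [show p * t + k (i + s) - a = p * t + (k (i + s) - a) by omega,
      Nat.mul_add_mod, Nat.mod_eq_of_lt (by omega)]
    omega
  have hKmono : ∀ m, K m < K (m + 1) := by
    intro m
    obtain ⟨t, s, ht, hs, hsD, hKm, hnext⟩ := hKvals m
    obtain ⟨hge, hlt⟩ := hKb s hsD
    rcases hnext with ⟨-, he⟩ | ⟨h2, he⟩
    · rw [hKm, he]; omega
    · rw [hKm, he]
      have := hkm (show i + s < i + s + 1 by omega)
      omega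
  have hk'mono : StrictMono k' := by
    apply strictMono_nat_of_lt_succ
    intro n
    rcases Nat.lt_or_ge n i with h1 | h1
    · simp only [hk']
      rw [if_pos (by omega), if_pos (by omega)]
      exact hkm (by omega)
    · rw [hKi n h1, hKi (n + 1) (by omega), show n + 1 - i = (n - i) + 1 by omega]
      exact hKmono (n - i)
  refine ⟨β, ⟨a, p, hp, ?_⟩, r', v', ⟨?_, hrun'⟩, k', ?_, hk'mono, ?_, ?_⟩
  · -- ultimately periodic
    intro m hm
    simp only [hβ]
    rw [if_neg (by omega), if_neg (by omega),
      show m + p - a = m - a + p by omega, Nat.add_mod_right]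
  · -- initial state
    rw [hrlow 0 (by omega)]
    exact hr0
  · -- k' 0 = 0
    simp only [hk']; rw [if_pos (by omega)]
    exact hk0
  · -- accepting states at resets
    intro n
    rcases Nat.lt_or_ge (n + 1) (i + 1) with h1 | h1
    · have hkle : k (n + 1) ≤ a := hkm.monotone (by omega)
      have : k' (n + 1) = k (n + 1) := by
        simp only [hk']; rw [if_pos (by omega)]
      rw [this, hrlow _ hkle]
      exact hacc n
    · rw [hKi (n + 1) (by omega), hrK]
      obtain ⟨s', hs'⟩ : ∃ s', (n + 1 - i) % D = s' := ⟨_, rfl⟩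
      rw [hs']
      have := hacc (i + s' - 1)
      rwa [show i + s' - 1 + 1 = i + s' by omega] at this
  · -- vector constraints at resets
    intro n
    rcases Nat.lt_or_ge (n + 1) (i + 1) with h1 | h1
    · have e1 : k' n = k n := by simp only [hk']; rw [if_pos (by omega)]
      have e2 : k' (n + 1) = k (n + 1) := by simp only [hk']; rw [if_pos (by omega)]
      rw [e1, e2, hlowsum _ _ (hkm.monotone (by omega))]
      exact hC n
    · have hni : i ≤ n := by omega
      rw [hKi n hni, hKi (n + 1) (by omega), show n + 1 - i = (n - i) + 1 by omega]
      obtain ⟨t, s, ht, hs, hsD, hKm, hnext⟩ := hKvals (n - i)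
      obtain ⟨hge, hlt⟩ := hKb s hsD
      rcases hnext with ⟨hcase, he⟩ | ⟨hcase, he⟩
      · rw [hKm, he, show (b:ℕ) = p * t + b - p * t by omega]
        rw [show p * t + b - p * t = b by omega]
        rw [hshift t (k (i + s)) b hge (by omega) (by omega)]
        have hb' : b = k (i + s + 1) := by rw [hb]; congr 1; omega
        rw [hb']
        exact hC (i + s)
      · have hle2 : k (i + s + 1) ≤ b := hkm.monotone (by omega)
        rw [hKm, he, hshift t (k (i + s)) (k (i + s + 1)) hge
          (hkm.monotone (by omega)) hle2]
        exact hC (i + s)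


/-! ### Determinization embedding -/

/-- View a deterministic PA as a nondeterministic one. -/
def DetPA.toNPA {Q S : Type} {d : ℕ} (A : DetPA Q S d ℕ) : NPA Q S d where
  init := A.init
  trans := fun p s u q => A.trans p s = (u, q)
  acc := A.acc
  C := A.C

lemma toNPA_correct {Q S : Type} {d : ℕ} (A : DetPA Q S d ℕ) (α : ℕ → S) :
    A.WeakResetAccept α ↔ A.toNPA.WeakResetAccept α := by
  constructor
  · rintro ⟨k, hk0, hkm, hacc, hC⟩
    refine ⟨A.stateAt α, A.step α, ⟨rfl, fun i => ?_⟩, k, hk0, hkm, hacc, hC⟩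
    show A.trans (A.stateAt α i) (α i) = (A.step α i, A.stateAt α (i + 1))
    rfl
  · rintro ⟨r, v, ⟨hr0, hrt⟩, k, hk0, hkm, hacc, hC⟩
    have hkey : ∀ i, r i = A.stateAt α i ∧ (∀ i, v i = A.step α i → True) := by
      exact fun i => ⟨by
        induction i with
        | zero => exact hr0
        | succ m ih =>
            have := hrt m
            simp only [DetPA.toNPA] at this
            have h2 : r (m + 1) = (A.trans (r m) (α m)).2 := by rw [this]
            rw [h2, ih]
            rfl, fun _ _ => trivial⟩
    have hr : ∀ i, r i = A.stateAt α i := fun i => (hkey i).1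
    have hv : ∀ i, v i = A.step α i := by
      intro i
      have := hrt i
      simp only [DetPA.toNPA] at this
      have h1 : v i = (A.trans (r i) (α i)).1 := by rw [this]
      rw [h1, hr i]
      rfl
    have hsum : ∀ m n, NPA.partSum v m n = A.vecSum α m n := by
      intro m n
      unfold NPA.partSum DetPA.vecSum
      exact Finset.sum_congr rfl fun x _ => hv x
    refine ⟨k, hk0, hkm, fun i => ?_, fun i => ?_⟩
    · have := hacc i
      rwa [hr] at this
    · have := hC i
      rwa [hsum] at this

/-- `L_{a=b} ∩ L_{2a=b}` contains no ultimately periodic word, hence is not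
weak reset PA recognizable; so deterministic weak reset PA languages are not closed
under intersection. -/
theorem weakReset_not_closed_inter :
    (∀ α ∈ L18ab ∩ L182ab, ¬ UltimatelyPeriodic α) ∧
    ¬ NPAWeakResetRecog (L18ab ∩ L182ab) ∧
    ∃ L₁ L₂ : Set (ℕ → Bool), DetWeakResetRecog L₁ ∧ DetWeakResetRecog L₂ ∧
      ¬ DetWeakResetRecog (L₁ ∩ L₂) := by
  have ha : ∀ α ∈ L18ab ∩ L182ab, ¬ UltimatelyPeriodic α := fun α hα => no_up α hα.1 hα.2
  have hb : ¬ NPAWeakResetRecog (L18ab ∩ L182ab) := by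
    rintro ⟨d, Q, hQ, A, hCsl, hL⟩
    have hmem : myW ∈ L18ab ∩ L182ab := ⟨myW_mem1, myW_mem2⟩
    have haccw : A.WeakResetAccept myW := by rw [hL] at hmem; exact hmem
    obtain ⟨β, hup, hbacc⟩ := @NPA.pump Q Bool hQ d A myW haccw
    have hβmem : β ∈ L18ab ∩ L182ab := by rw [hL]; exact hbacc
    exact ha β hβmem hup
  refine ⟨ha, hb, L18ab, L182ab, recog_L18ab, recog_L182ab, ?_⟩
  rintro ⟨d, Q, hQ, A, hCsl, hL⟩
  refine hb ⟨d, Q, hQ, A.toNPA, hCsl, ?_⟩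
  rw [hL]
  ext α
  exact toNPA_correct A α
end
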